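/- Let γ be a real number and m a positive natural number. Define the differential operator K acting on polynomials p ∈ ℝ[X] by K p = −p'' + (2X³ + γ·√m·X)·p' − (4m·X² − (γ·√m)/2)·p. If p is a polynomial all of whose nonzero coefficients are in even degrees and deg p ≤ 2m, then K p also has nonzero coefficients only in even degrees and deg(K p) ≤ 2m. In other words, K preserves the (m+1)-dimensional linear space of even polynomials of degree ≤ 2m. -/
import Mathlib


open Polynomial

/-- The differential operator `K p = -p'' + (2X³ + γ√m X) p' - (4m X² - γ√m/2) p`
preserves the space of even polynomials of degree at most `2m`. -/
theorem stmt_0 (γ : ℝ) (m : ℕ) (hm : 0 < m) (p : ℝ[X])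
    (heven : ∀ k : ℕ, Odd k → p.coeff k = 0) (hdeg : p.degree ≤ (2 * m : ℕ)) :
    let K : ℝ[X] → ℝ[X] := fun q =>
      -(derivative (derivative q))
        + (2 * X ^ 3 + C (γ * Real.sqrt m) * X) * derivative q
        - (C (4 * (m : ℝ)) * X ^ 2 - C (γ * Real.sqrt m / 2)) * q
    (∀ k : ℕ, Odd k → (K p).coeff k = 0) ∧ (K p).degree ≤ (2 * m : ℕ) := by
  intro K
  have hkey : ∀ k : ℕ, (K p).coeff k =
      -(p.coeff (k+2) * (k+2) * (k+1))
      + 2 * (if 3 ≤ k then (derivative p).coeff (k-3) else 0)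
      + (γ * Real.sqrt m) * (if 1 ≤ k then (derivative p).coeff (k-1) else 0)
      - 4 * m * (if 2 ≤ k then p.coeff (k-2) else 0)
      + (γ * Real.sqrt m / 2) * p.coeff k := by
    intro k
    have hK : K p = -(derivative (derivative p))
        + C 2 * (derivative p * X ^ 3) + C (γ * Real.sqrt m) * (derivative p * X ^ 1)
        - C (4 * (m : ℝ)) * (p * X ^ 2) + C (γ * Real.sqrt m / 2) * p := by
      simp only [K, map_ofNat]
      ring
    rw [hK]
    simp only [coeff_add, coeff_sub, coeff_neg, coeff_C_mul, coeff_derivative,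
      coeff_mul_X_pow']
    push_cast
    ring
  have hp0 : ∀ k : ℕ, 2 * m < k → p.coeff k = 0 := by
    intro k hk
    apply coeff_eq_zero_of_degree_lt
    exact lt_of_le_of_lt hdeg (by exact_mod_cast hk)
  constructor
  · intro k hk
    rw [Nat.odd_iff] at hk
    have e0 : p.coeff (k+2) = 0 := heven _ (Nat.odd_iff.mpr (by omega))
    have ek : p.coeff k = 0 := heven _ (Nat.odd_iff.mpr hk)
    have e3 : (if 3 ≤ k then (derivative p).coeff (k-3) else 0) = 0 := by
      split_ifs with h
      · rw [coeff_derivative, heven _ (Nat.odd_iff.mpr (by omega)), zero_mul]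
      · rfl
    have e1 : (if 1 ≤ k then (derivative p).coeff (k-1) else 0) = 0 := by
      split_ifs with h
      · rw [coeff_derivative, heven _ (Nat.odd_iff.mpr (by omega)), zero_mul]
      · rfl
    have e2 : (if 2 ≤ k then p.coeff (k-2) else 0) = 0 := by
      split_ifs with h
      · exact heven _ (Nat.odd_iff.mpr (by omega))
      · rfl
    rw [hkey, e0, ek, e1, e2, e3]
    ring
  · rw [degree_le_iff_coeff_zero]
    intro k hk
    have hk' : 2 * m < k := by exact_mod_cast hk
    have e0 : p.coeff (k+2) = 0 := hp0 _ (by omega)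
    have ek : p.coeff k = 0 := hp0 _ (by omega)
    have e1 : (if 1 ≤ k then (derivative p).coeff (k-1) else 0) = 0 := by
      rw [if_pos (by omega : 1 ≤ k), coeff_derivative]
      have h : k - 1 + 1 = k := by omega
      rw [h, ek, zero_mul]
    rw [hkey, e0, ek, e1, if_pos (show 3 ≤ k by omega), if_pos (show 2 ≤ k by omega),
      coeff_derivative]
    have h32 : k - 3 + 1 = k - 2 := by omega
    rw [h32]
    by_cases hcase : k = 2 * m + 2
    · subst hcase
      have hc : ((2 * m + 2 - 3 : ℕ) : ℝ) + 1 = 2 * m := by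
        have h : 2 * m + 2 - 3 = 2 * m - 1 := by omega
        rw [h, Nat.cast_sub (by omega)]
        push_cast
        ring
      rw [hc]
      ring
    · have hz : p.coeff (k - 2) = 0 := by
        rcases Nat.lt_or_ge k (2 * m + 2) with h | h
        · exact heven _ (Nat.odd_iff.mpr (by omega))
        · exact hp0 _ (by omega)
      rw [hz]
      ring
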